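/- Let W, M, M̂ be n×n real matrices with W⊙M̂ invertible, let x ∈ ℝⁿ, and let x̂ = (W⊙M̂)⁻¹ (W⊙M) x. Then ‖x − x̂‖ ≥ (σ_min(W⊙(M̂−M)) / σ_max(W⊙M̂)) · ‖x‖, where ⊙ is the Hadamard product, σ_min(A) := inf_{‖v‖=1} ‖Av‖, and σ_max(A) := sup_{‖v‖=1} ‖Av‖ with respect to the Euclidean norm. -/

import Mathlib

open Matrix

/-- The Euclidean norm of a vector in `ℝⁿ`. -/
noncomputable def euclNorm {n : ℕ} (x : Fin n → ℝ) : ℝ :=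
  Real.sqrt (∑ i, x i ^ 2)

/-- `σ_min(A) = inf_{‖v‖ = 1} ‖A v‖` (with respect to the Euclidean norm). -/
noncomputable def sigmaMin {n : ℕ} (A : Matrix (Fin n) (Fin n) ℝ) : ℝ :=
  ⨅ v : {v : Fin n → ℝ // euclNorm v = 1}, euclNorm (A *ᵥ (v : Fin n → ℝ))

/-- `σ_max(A) = sup_{‖v‖ = 1} ‖A v‖` (the Euclidean operator norm). -/
noncomputable def sigmaMax {n : ℕ} (A : Matrix (Fin n) (Fin n) ℝ) : ℝ :=
  ⨆ v : {v : Fin n → ℝ // euclNorm v = 1}, euclNorm (A *ᵥ (v : Fin n → ℝ))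

lemma euclNorm_eq_norm {n : ℕ} (x : Fin n → ℝ) :
    euclNorm x = ‖(WithLp.equiv 2 (Fin n → ℝ)).symm x‖ := by
  rw [euclNorm, EuclideanSpace.norm_eq]
  congr 1
  refine Finset.sum_congr rfl fun i _ => ?_
  rw [Real.norm_eq_abs, sq_abs]
  rfl

lemma euclNorm_nonneg {n : ℕ} (x : Fin n → ℝ) : 0 ≤ euclNorm x :=
  Real.sqrt_nonneg _

lemma euclNorm_smul {n : ℕ} (c : ℝ) (x : Fin n → ℝ) :
    euclNorm (c • x) = |c| * euclNorm x := by
  rw [euclNorm_eq_norm, euclNorm_eq_norm, ← Real.norm_eq_abs]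
  rw [show (WithLp.equiv 2 (Fin n → ℝ)).symm (c • x)
      = c • (WithLp.equiv 2 (Fin n → ℝ)).symm x from rfl, norm_smul]

lemma euclNorm_eq_zero {n : ℕ} {x : Fin n → ℝ} (h : euclNorm x = 0) : x = 0 := by
  rw [euclNorm_eq_norm] at h
  have := norm_eq_zero.mp h
  simpa using congrArg (WithLp.equiv 2 (Fin n → ℝ)) this

lemma sigmaMin_mul_le {n : ℕ} (A : Matrix (Fin n) (Fin n) ℝ) (x : Fin n → ℝ) :
    sigmaMin A * euclNorm x ≤ euclNorm (A *ᵥ x) := by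
  rcases eq_or_ne x 0 with rfl | hx
  · simp only [mulVec_zero]
    have h0 : euclNorm (0 : Fin n → ℝ) = 0 := by simp [euclNorm]
    rw [h0, mul_zero]
  · have hc : 0 < euclNorm x := by
      rcases lt_or_eq_of_le (euclNorm_nonneg x) with h | h
      · exact h
      · exact absurd (euclNorm_eq_zero h.symm) hx
    set c := euclNorm x with hcdef
    have hv : euclNorm (c⁻¹ • x) = 1 := by
      rw [euclNorm_smul, abs_of_pos (inv_pos.mpr hc), inv_mul_cancel₀ hc.ne']
    have hbdd : BddBelow (Set.range fun v : {v : Fin n → ℝ // euclNorm v = 1} =>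
        euclNorm (A *ᵥ (v : Fin n → ℝ))) := by
      refine ⟨0, fun y hy => ?_⟩
      obtain ⟨v, rfl⟩ := hy
      exact euclNorm_nonneg _
    have hle : sigmaMin A ≤ euclNorm (A *ᵥ (c⁻¹ • x)) :=
      ciInf_le hbdd ⟨c⁻¹ • x, hv⟩
    rw [mulVec_smul, euclNorm_smul, abs_of_pos (inv_pos.mpr hc)] at hle
    calc sigmaMin A * c ≤ (c⁻¹ * euclNorm (A *ᵥ x)) * c := by
          exact mul_le_mul_of_nonneg_right hle hc.le
      _ = euclNorm (A *ᵥ x) := by field_simp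

lemma le_sigmaMax_mul {n : ℕ} (A : Matrix (Fin n) (Fin n) ℝ) (x : Fin n → ℝ) :
    euclNorm (A *ᵥ x) ≤ sigmaMax A * euclNorm x := by
  rcases eq_or_ne x 0 with rfl | hx
  · simp only [mulVec_zero]
    have h0 : euclNorm (0 : Fin n → ℝ) = 0 := by simp [euclNorm]
    rw [h0, mul_zero]
  · have hc : 0 < euclNorm x := by
      rcases lt_or_eq_of_le (euclNorm_nonneg x) with h | h
      · exact h
      · exact absurd (euclNorm_eq_zero h.symm) hx
    set c := euclNorm x with hcdef
    have hv : euclNorm (c⁻¹ • x) = 1 := by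
      rw [euclNorm_smul, abs_of_pos (inv_pos.mpr hc), inv_mul_cancel₀ hc.ne']
    -- boundedness via the operator norm of the associated continuous linear map
    have hbdd : BddAbove (Set.range fun v : {v : Fin n → ℝ // euclNorm v = 1} =>
        euclNorm (A *ᵥ (v : Fin n → ℝ))) := by
      refine ⟨‖LinearMap.toContinuousLinearMap (Matrix.toEuclideanLin A)‖, fun y hy => ?_⟩
      obtain ⟨v, rfl⟩ := hy
      have h1 : euclNorm (A *ᵥ (v : Fin n → ℝ)) =
          ‖LinearMap.toContinuousLinearMap (Matrix.toEuclideanLin A)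
            ((WithLp.equiv 2 (Fin n → ℝ)).symm (v : Fin n → ℝ))‖ := by
        rw [euclNorm_eq_norm]
        congr 1
      show euclNorm (A *ᵥ (v : Fin n → ℝ)) ≤ _
      rw [h1]
      calc ‖LinearMap.toContinuousLinearMap (Matrix.toEuclideanLin A)
            ((WithLp.equiv 2 (Fin n → ℝ)).symm (v : Fin n → ℝ))‖
          ≤ ‖LinearMap.toContinuousLinearMap (Matrix.toEuclideanLin A)‖ *
            ‖(WithLp.equiv 2 (Fin n → ℝ)).symm (v : Fin n → ℝ)‖ :=
            ContinuousLinearMap.le_opNorm _ _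
        _ = ‖LinearMap.toContinuousLinearMap (Matrix.toEuclideanLin A)‖ := by
            rw [← euclNorm_eq_norm, v.2, mul_one]
    have hle : euclNorm (A *ᵥ (c⁻¹ • x)) ≤ sigmaMax A :=
      le_ciSup hbdd ⟨c⁻¹ • x, hv⟩
    rw [mulVec_smul, euclNorm_smul, abs_of_pos (inv_pos.mpr hc)] at hle
    calc euclNorm (A *ᵥ x) = (c⁻¹ * euclNorm (A *ᵥ x)) * c := by field_simp
      _ ≤ sigmaMax A * c := mul_le_mul_of_nonneg_right hle hc.le

/-- Per-mask deterministic reconstruction error bound: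
if `x̂ = (W ⊙ M̂)⁻¹ (W ⊙ M) x` with `W ⊙ M̂` invertible, then
`‖x − x̂‖ ≥ (σ_min(W ⊙ (M̂ − M)) / σ_max(W ⊙ M̂)) ‖x‖`. -/
theorem per_mask_reconstruction_error_lower_bound {n : ℕ}
    (W M Mhat : Matrix (Fin n) (Fin n) ℝ)
    (hinv : IsUnit (W ⊙ Mhat))
    (x : Fin n → ℝ)
    (xhat : Fin n → ℝ)
    (hxhat : xhat = (W ⊙ Mhat)⁻¹ *ᵥ ((W ⊙ M) *ᵥ x)) :
    euclNorm (x - xhat) ≥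
      (sigmaMin (W ⊙ (Mhat - M)) / sigmaMax (W ⊙ Mhat)) * euclNorm x := by
  set B := W ⊙ Mhat with hB
  set C := W ⊙ M with hC
  have hDsub : W ⊙ (Mhat - M) = B - C := by
    ext i j
    simp only [hB, hC, hadamard_apply, Matrix.sub_apply, mul_sub]
  have hdet : IsUnit B.det := (Matrix.isUnit_iff_isUnit_det B).mp hinv
  have hkey : B *ᵥ (x - xhat) = (W ⊙ (Mhat - M)) *ᵥ x := by
    rw [hDsub, sub_mulVec, mulVec_sub, hxhat, mulVec_mulVec,
      Matrix.mul_nonsing_inv B hdet, one_mulVec]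
  -- chain of inequalities
  have h1 : sigmaMin (W ⊙ (Mhat - M)) * euclNorm x
      ≤ euclNorm ((W ⊙ (Mhat - M)) *ᵥ x) := sigmaMin_mul_le _ _
  have h2 : euclNorm (B *ᵥ (x - xhat)) ≤ sigmaMax B * euclNorm (x - xhat) :=
    le_sigmaMax_mul _ _
  have hchain : sigmaMin (W ⊙ (Mhat - M)) * euclNorm x
      ≤ sigmaMax B * euclNorm (x - xhat) := by
    rw [← hkey] at h1
    exact h1.trans h2
  have hσnn : 0 ≤ sigmaMax B := by
    apply Real.iSup_nonneg
    intro v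
    exact euclNorm_nonneg _
  rcases eq_or_lt_of_le hσnn with hz | hpos
  · rw [← hz, div_zero, zero_mul]
    exact euclNorm_nonneg _
  · rw [ge_iff_le, div_mul_eq_mul_div, div_le_iff₀ hpos]
    linarith [hchain]
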